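/- Let φ : ℝ³ → ℝ³ be the map φ(x,y,z) = (1/z, (1+z²)·y, x·z²/(1+z²)) and let θ_γ : ℝ³ → ℝ³ be θ_γ(x,y,z) = (y, x·z, x·z). Suppose x, y, z : (0,∞) → (0,∞) are families of positive reals and a, b > 0 are such that, as t → 0⁺, z(t) → 0, y(t) → a, and x(t)·z(t) → b. Then both θ_γ(x(t), y(t), z(t)) → (a, b, b) and θ_γ(φ(x(t), y(t), z(t))) → (a, b, b) as t → 0⁺. In particular the two limits agree, so the map induced by φ on the limiting pinched coordinates is the identity. -/

import Mathlib

open Filter Topology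

/-- The action `Φ_{T_γ,λ}` of the Dehn twist `T_γ` in shear coordinates `(x,y,z)`. -/
noncomputable def phi : ℝ × ℝ × ℝ → ℝ × ℝ × ℝ :=
  fun p => (1 / p.2.2, (1 + p.2.2 ^ 2) * p.2.1, p.1 * p.2.2 ^ 2 / (1 + p.2.2 ^ 2))

/-- The pinching map `Θ_{γ,λ}`. -/
def thetaGamma : ℝ × ℝ × ℝ → ℝ × ℝ × ℝ :=
  fun p => (p.2.1, p.1 * p.2.2, p.1 * p.2.2)

/-- If `z(t) → 0`, `y(t) → a`, `x(t)·z(t) → b` as `t → 0⁺` (with everything positive),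
then both `θ_γ(x(t),y(t),z(t))` and `θ_γ(φ(x(t),y(t),z(t)))` tend to `(a,b,b)`;
so the map induced by `φ` on the limiting pinched coordinates is the identity. -/
theorem stmt2 (x y z : ℝ → ℝ)
    (hxpos : ∀ t ∈ Set.Ioi (0 : ℝ), 0 < x t)
    (hypos : ∀ t ∈ Set.Ioi (0 : ℝ), 0 < y t)
    (hzpos : ∀ t ∈ Set.Ioi (0 : ℝ), 0 < z t)
    (a b : ℝ) (ha : 0 < a) (hb : 0 < b)
    (hz : Tendsto z (𝓝[>] (0 : ℝ)) (𝓝 0))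
    (hy : Tendsto y (𝓝[>] (0 : ℝ)) (𝓝 a))
    (hxz : Tendsto (fun t => x t * z t) (𝓝[>] (0 : ℝ)) (𝓝 b)) :
    Tendsto (fun t => thetaGamma (x t, y t, z t)) (𝓝[>] (0 : ℝ)) (𝓝 (a, b, b)) ∧
    Tendsto (fun t => thetaGamma (phi (x t, y t, z t))) (𝓝[>] (0 : ℝ)) (𝓝 (a, b, b)) := by
  have hz2 : Tendsto (fun t => 1 + z t ^ 2) (𝓝[>] (0 : ℝ)) (𝓝 1) := by
    have : Tendsto (fun t => 1 + z t ^ 2) (𝓝[>] (0 : ℝ)) (𝓝 (1 + 0 ^ 2)) :=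
      tendsto_const_nhds.add (hz.pow 2)
    simpa using this
  have h1 : Tendsto (fun t => (1 + z t ^ 2) * y t) (𝓝[>] (0 : ℝ)) (𝓝 a) := by
    have := hz2.mul hy
    simpa using this
  have h2 : Tendsto (fun t => x t * z t / (1 + z t ^ 2)) (𝓝[>] (0 : ℝ)) (𝓝 b) := by
    have := hxz.div hz2 (by norm_num)
    rw [div_one] at this
    exact this
  have heq : ∀ t ∈ Set.Ioi (0 : ℝ),
      (1 / z t) * (x t * z t ^ 2 / (1 + z t ^ 2)) = x t * z t / (1 + z t ^ 2) := by
    intro t ht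
    have hzne : z t ≠ 0 := (hzpos t ht).ne'
    field_simp
  have h2' : Tendsto (fun t => (1 / z t) * (x t * z t ^ 2 / (1 + z t ^ 2)))
      (𝓝[>] (0 : ℝ)) (𝓝 b) := by
    refine h2.congr' ?_
    filter_upwards [self_mem_nhdsWithin] with t ht
    exact (heq t ht).symm
  constructor
  · exact hy.prodMk_nhds (hxz.prodMk_nhds hxz)
  · exact h1.prodMk_nhds (h2'.prodMk_nhds h2')
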